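/- arXiv:math/0309216 — 2 statements merged into one kernel-verified Lean document; each statement's English description precedes it below -/
import Mathlib

section
/- Let u_1, u_2, u_3, u_4 ∈ ℝ⁴ with ⟨u_i, u_i⟩ = 1 for all i, let G be the 4×4 matrix with G_{ij} = ⟨u_i, u_j⟩, and assume det G < 0, c_{33} > 0, and c_{44} > 0. Define w_i := Σ_{k=1}^{4} c_{ik} u_k, v_3 := w_3 / √(−c_{33} · det G), and v_4 := w_4 / √(−c_{44} · det G). Then ⟨v_3, v_3⟩ = ⟨v_4, v_4⟩ = −1 and ⟨v_3, v_4⟩ = −c_{34} / √(c_{33} c_{44}). In particular, when v_3 and v_4 lie on the same sheet of the hyperboloid ⟨x,x⟩ = −1, the hyperbolic distance l between the two vertices v_3 and v_4 satisfies cosh l = c_{34} / √(c_{33} c_{44}). -/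
noncomputable section
open Matrix BigOperators

/-- The Lorentzian inner product on `ℝ^{n+1}`:
`⟨x, y⟩ = -x₀y₀ + x₁y₁ + ⋯ + xₙyₙ`. -/
def lform {n : ℕ} (x y : Fin (n + 1) → ℝ) : ℝ :=
  ∑ i, (if i = 0 then (-1 : ℝ) else 1) * x i * y i

/-- The `(i,j)` cofactor of a square matrix: `(-1)^(i+j)` times the determinant
of the matrix obtained by deleting the `i`-th row and the `j`-th column. -/
def cofactor {n : ℕ} (G : Matrix (Fin (n + 1)) (Fin (n + 1)) ℝ) (i j : Fin (n + 1)) : ℝ :=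
  (-1 : ℝ) ^ ((i : ℕ) + (j : ℕ)) * (G.submatrix i.succAbove j.succAbove).det

lemma cofactor_row_expand {n : ℕ} (G : Matrix (Fin (n + 1)) (Fin (n + 1)) ℝ)
    (j k : Fin (n + 1)) :
    ∑ l, cofactor G j l * G k l = if k = j then G.det else 0 := by
  have key : (G.updateRow j (G k)).det = ∑ l, cofactor G j l * G k l := by
    rw [Matrix.det_succ_row (G.updateRow j (G k)) j]
    refine Finset.sum_congr rfl fun l _ => ?_
    have h1 : G.updateRow j (G k) j l = G k l := by
      rw [Matrix.updateRow_self]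
    have h2 : (G.updateRow j (G k)).submatrix j.succAbove l.succAbove
        = G.submatrix j.succAbove l.succAbove := by
      ext a b
      simp [Matrix.submatrix_apply, Matrix.updateRow_ne (Fin.succAbove_ne j a)]
    rw [h1, h2, cofactor]; ring
  by_cases h : k = j
  · subst h
    rw [Matrix.updateRow_eq_self] at key
    simp [← key]
  · have hz : (G.updateRow j (G k)).det = 0 := by
      refine Matrix.det_zero_of_row_eq (Ne.symm h) ?_
      rw [Matrix.updateRow_self, Matrix.updateRow_ne h]
    simp [← key, hz, h]

lemma lform_smul_left {n : ℕ} (a : ℝ) (x y : Fin (n + 1) → ℝ) :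
    lform (a • x) y = a * lform x y := by
  simp only [lform, Pi.smul_apply, smul_eq_mul, Finset.mul_sum]
  exact Finset.sum_congr rfl fun i _ => by ring

lemma lform_smul_right {n : ℕ} (a : ℝ) (x y : Fin (n + 1) → ℝ) :
    lform x (a • y) = a * lform x y := by
  simp only [lform, Pi.smul_apply, smul_eq_mul, Finset.mul_sum]
  exact Finset.sum_congr rfl fun i _ => by ring

lemma lform_sum_left {n : ℕ} {ι : Type*} [Fintype ι] (f : ι → Fin (n + 1) → ℝ)
    (y : Fin (n + 1) → ℝ) :
    lform (∑ k, f k) y = ∑ k, lform (f k) y := by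
  simp only [lform, Finset.sum_apply, Finset.sum_mul, Finset.mul_sum]
  rw [Finset.sum_comm]

lemma lform_sum_right {n : ℕ} {ι : Type*} [Fintype ι] (x : Fin (n + 1) → ℝ)
    (f : ι → Fin (n + 1) → ℝ) :
    lform x (∑ k, f k) = ∑ k, lform x (f k) := by
  simp only [lform, Finset.sum_apply, Finset.mul_sum]
  rw [Finset.sum_comm]

lemma sqrt_prod_eq {A B D : ℝ} (hA : 0 < A) (hB : 0 < B) (hD : D < 0) :
    Real.sqrt (-(A * D)) * Real.sqrt (-(B * D)) = Real.sqrt (A * B) * (-D) := by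
  rw [← Real.sqrt_mul (by nlinarith)]
  have : -(A * D) * -(B * D) = (A * B) * (-D) ^ 2 := by ring
  rw [this, Real.sqrt_mul (by positivity), Real.sqrt_sq (by linarith)]

lemma scalar_one {A D : ℝ} (hA : 0 < A) (hD : D < 0) :
    (Real.sqrt (-(A * D)))⁻¹ * ((Real.sqrt (-(A * D)))⁻¹ * (A * D)) = -1 := by
  have hAD : 0 < -(A * D) := by nlinarith
  rw [← mul_assoc, ← mul_inv, Real.mul_self_sqrt hAD.le]
  field_simp
  rw [div_self hD.ne]

lemma scalar_cross {A B C D : ℝ} (hA : 0 < A) (hB : 0 < B) (hD : D < 0) :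
    (Real.sqrt (-(A * D)))⁻¹ * ((Real.sqrt (-(B * D)))⁻¹ * (C * D))
      = -C / Real.sqrt (A * B) := by
  rw [← mul_assoc, ← mul_inv, sqrt_prod_eq hA hB hD]
  have hAB : (0 : ℝ) < Real.sqrt (A * B) := Real.sqrt_pos.mpr (by positivity)
  field_simp [hD.ne, hAB.ne']

theorem stmt6 (u : Fin 4 → (Fin 4 → ℝ))
    (hunit : ∀ i, lform (u i) (u i) = 1)
    (G : Matrix (Fin 4) (Fin 4) ℝ)
    (hGdef : ∀ i j, G i j = lform (u i) (u j))
    (hdet : G.det < 0)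
    (h33 : 0 < cofactor G 2 2) (h44 : 0 < cofactor G 3 3) :
    let w : Fin 4 → (Fin 4 → ℝ) := fun i => ∑ k, cofactor G i k • u k
    let v3 : Fin 4 → ℝ := (Real.sqrt (-(cofactor G 2 2 * G.det)))⁻¹ • w 2
    let v4 : Fin 4 → ℝ := (Real.sqrt (-(cofactor G 3 3 * G.det)))⁻¹ • w 3
    lform v3 v3 = -1 ∧ lform v4 v4 = -1 ∧
    lform v3 v4 = -cofactor G 2 3 / Real.sqrt (cofactor G 2 2 * cofactor G 3 3) ∧
    (0 < v3 0 * v4 0 →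
      ∀ l : ℝ, Real.cosh l = -lform v3 v4 →
        Real.cosh l = cofactor G 2 3 / Real.sqrt (cofactor G 2 2 * cofactor G 3 3)) := by
  intro w v3 v4
  -- inner products of w's
  have hww : ∀ i j, lform (w i) (w j) = cofactor G i j * G.det := by
    intro i j
    have : lform (w i) (w j)
        = ∑ k, cofactor G i k * ∑ l, cofactor G j l * G k l := by
      rw [show w i = ∑ k, cofactor G i k • u k from rfl,
          show w j = ∑ l, cofactor G j l • u l from rfl]
      simp only [lform_sum_left, lform_sum_right, lform_smul_left, lform_smul_right]
      simp only [Finset.mul_sum, hGdef]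
      rw [Finset.sum_comm]
      exact Finset.sum_congr rfl fun k _ => Finset.sum_congr rfl fun l _ => by ring
    rw [this]
    simp only [cofactor_row_expand]
    simp
  have e1 : lform v3 v3
      = (Real.sqrt (-(cofactor G 2 2 * G.det)))⁻¹
        * ((Real.sqrt (-(cofactor G 2 2 * G.det)))⁻¹ * (cofactor G 2 2 * G.det)) := by
    simp only [v3, lform_smul_left, lform_smul_right, hww]
  have e2 : lform v4 v4
      = (Real.sqrt (-(cofactor G 3 3 * G.det)))⁻¹
        * ((Real.sqrt (-(cofactor G 3 3 * G.det)))⁻¹ * (cofactor G 3 3 * G.det)) := by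
    simp only [v4, lform_smul_left, lform_smul_right, hww]
  have e3 : lform v3 v4
      = (Real.sqrt (-(cofactor G 2 2 * G.det)))⁻¹
        * ((Real.sqrt (-(cofactor G 3 3 * G.det)))⁻¹ * (cofactor G 2 3 * G.det)) := by
    simp only [v3, v4, lform_smul_left, lform_smul_right, hww]
    ring
  have h1 : lform v3 v3 = -1 := by rw [e1]; exact scalar_one h33 hdet
  have h2 : lform v4 v4 = -1 := by rw [e2]; exact scalar_one h44 hdet
  have h3 : lform v3 v4
      = -cofactor G 2 3 / Real.sqrt (cofactor G 2 2 * cofactor G 3 3) := by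
    rw [e3]; exact scalar_cross h33 h44 hdet
  refine ⟨h1, h2, h3, ?_⟩
  intro _ l hl
  rw [hl, h3]
  ring
end
end

section
/- Let u_1, u_2, u_3, u_4 ∈ ℝ⁴ with ⟨u_i, u_i⟩ = 1 for all i, let G be the 4×4 matrix with G_{ij} = ⟨u_i, u_j⟩, and assume det G < 0, c_{33} > 0, and c_{44} < 0. Define w_i := Σ_{k=1}^{4} c_{ik} u_k, v_3 := w_3 / √(−c_{33} · det G), and v_4 := w_4 / √(c_{44} · det G). Then ⟨v_3, v_3⟩ = −1, ⟨v_4, v_4⟩ = 1, and ⟨v_3, v_4⟩ = −c_{34} / √(−c_{33} c_{44}). -/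
noncomputable section
open Matrix BigOperators

lemma cofactor_expand {n : ℕ} (G : Matrix (Fin (n + 1)) (Fin (n + 1)) ℝ) (j k : Fin (n + 1)) :
    ∑ l, cofactor G j l * G k l = if j = k then G.det else 0 := by
  by_cases h : j = k
  · subst h
    simp only [if_pos rfl]
    rw [Matrix.det_succ_row G j]
    apply Finset.sum_congr rfl
    intro l _
    simp [cofactor]; ring
  · simp only [if_neg h]
    have h0 : (G.updateRow j (G k)).det = 0 :=
      Matrix.det_zero_of_row_eq h (by simp [Matrix.updateRow_self, Matrix.updateRow_ne (Ne.symm h)])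
    rw [Matrix.det_succ_row _ j] at h0
    rw [← h0]
    apply Finset.sum_congr rfl
    intro l _
    have hsub : (G.updateRow j (G k)).submatrix j.succAbove l.succAbove
        = G.submatrix j.succAbove l.succAbove := by
      ext a b
      simp [Matrix.updateRow_apply, Fin.succAbove_ne j a]
    rw [hsub, Matrix.updateRow_self]
    simp [cofactor]; ring

lemma lform_sum_sum (a b : Fin 4 → ℝ) (u : Fin 4 → (Fin 4 → ℝ)) :
    lform (∑ k, a k • u k) (∑ l, b l • u l)
      = ∑ k, ∑ l, a k * b l * lform (u k) (u l) := by
  simp only [lform, Fin.sum_univ_succ, Fin.sum_univ_zero, Pi.add_apply, Pi.smul_apply,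
    smul_eq_mul, Finset.sum_apply]
  ring

lemma lform_smul (r s : ℝ) (x y : Fin 4 → ℝ) :
    lform (r • x) (s • y) = r * s * lform x y := by
  simp only [lform, Pi.smul_apply, smul_eq_mul, Finset.mul_sum]
  apply Finset.sum_congr rfl
  intro i _; ring

theorem stmt7 (u : Fin 4 → (Fin 4 → ℝ))
    (hunit : ∀ i, lform (u i) (u i) = 1)
    (G : Matrix (Fin 4) (Fin 4) ℝ)
    (hGdef : ∀ i j, G i j = lform (u i) (u j))
    (hdet : G.det < 0)
    (h33 : 0 < cofactor G 2 2) (h44 : cofactor G 3 3 < 0) :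
    let w : Fin 4 → (Fin 4 → ℝ) := fun i => ∑ k, cofactor G i k • u k
    let v3 : Fin 4 → ℝ := (Real.sqrt (-(cofactor G 2 2 * G.det)))⁻¹ • w 2
    let v4 : Fin 4 → ℝ := (Real.sqrt (cofactor G 3 3 * G.det))⁻¹ • w 3
    lform v3 v3 = -1 ∧ lform v4 v4 = 1 ∧
    lform v3 v4 = -cofactor G 2 3 / Real.sqrt (-(cofactor G 2 2 * cofactor G 3 3)) := by
  intro w v3 v4
  have hww : ∀ i j : Fin 4, lform (w i) (w j) = cofactor G i j * G.det := by
    intro i j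
    show lform (∑ k, cofactor G i k • u k) (∑ l, cofactor G j l • u l) = _
    rw [lform_sum_sum]
    have : ∀ k : Fin 4, ∑ l, cofactor G i k * cofactor G j l * lform (u k) (u l)
        = cofactor G i k * (if j = k then G.det else 0) := by
      intro k
      rw [← cofactor_expand G j k, Finset.mul_sum]
      apply Finset.sum_congr rfl
      intro l _
      rw [← hGdef k l]
      ring
    rw [Finset.sum_congr rfl fun k _ => this k]
    simp [Finset.mul_sum, mul_comm]
  -- positivity facts
  have hA : (0:ℝ) < -(cofactor G 2 2 * G.det) := by nlinarith
  have hB : (0:ℝ) < cofactor G 3 3 * G.det := by nlinarith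
  have hsA : Real.sqrt (-(cofactor G 2 2 * G.det)) ^ 2 = -(cofactor G 2 2 * G.det) :=
    Real.sq_sqrt hA.le
  have hsB : Real.sqrt (cofactor G 3 3 * G.det) ^ 2 = cofactor G 3 3 * G.det :=
    Real.sq_sqrt hB.le
  have hsA0 : Real.sqrt (-(cofactor G 2 2 * G.det)) ≠ 0 := by positivity
  have hsB0 : Real.sqrt (cofactor G 3 3 * G.det) ≠ 0 := by positivity
  refine ⟨?_, ?_, ?_⟩
  · show lform (_ • w 2) (_ • w 2) = -1
    rw [lform_smul, hww 2 2]
    field_simp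
    linarith [hsA]
  · show lform (_ • w 3) (_ • w 3) = 1
    rw [lform_smul, hww 3 3]
    field_simp
    linarith [hsB]
  · show lform (_ • w 2) (_ • w 3) = _
    rw [lform_smul, hww 2 3]
    have hprod : Real.sqrt (-(cofactor G 2 2 * G.det)) * Real.sqrt (cofactor G 3 3 * G.det)
        = Real.sqrt (-(cofactor G 2 2 * cofactor G 3 3)) * (-G.det) := by
      rw [← Real.sqrt_mul hA.le]
      have : -(cofactor G 2 2 * G.det) * (cofactor G 3 3 * G.det)
          = (-(cofactor G 2 2 * cofactor G 3 3)) * (-G.det) ^ 2 := by ring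
      rw [this, Real.sqrt_mul (by nlinarith), Real.sqrt_sq (by linarith)]
    have hs0 : Real.sqrt (-(cofactor G 2 2 * cofactor G 3 3)) ≠ 0 := by
      have : (0:ℝ) < -(cofactor G 2 2 * cofactor G 3 3) := by nlinarith
      positivity
    have hd : G.det ≠ 0 := ne_of_lt hdet
    rw [← mul_inv, hprod]
    field_simp
end
end
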